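/- Let I be a set, F a κ-complete filter on I, and A = ℤ^I / F the quotient of the product ℤ^I by the subgroup of elements whose zero-set belongs to F. Then every subgroup H of A of cardinality strictly less than κ embeds into ℤ^I. -/

import Mathlib

universe u

/-- The subgroup of `ℤ^I` of functions whose zero-set belongs to the filter `F`. -/
def zeroSetSubgroup {I : Type u} (F : Filter I) : AddSubgroup (I → ℤ) where
  carrier := {f | {i | f i = 0} ∈ F}
  zero_mem' := by simp
  add_mem' := by
    intro f g hf hg
    filter_upwards [hf, hg] with i h1 h2
    simp only [Pi.add_apply, Set.mem_setOf_eq] at *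
    omega
  neg_mem' := by
    intro f hf
    filter_upwards [hf] with i h
    simp only [Pi.neg_apply, Set.mem_setOf_eq] at *
    omega

/-- If `F` is a `κ`-complete filter on `I` (`κ` uncountable), then every subgroup of
`A = ℤ^I / F` of cardinality `< κ` embeds into `ℤ^I`. -/
theorem stmt10 {I : Type u} {κ : Cardinal.{u}} (hκ : Cardinal.aleph0 < κ)
    (F : Filter I)
    (hcomp : ∀ s : Set (Set I), Cardinal.mk s < κ → (∀ t ∈ s, t ∈ F) → ⋂₀ s ∈ F)
    (H : AddSubgroup ((I → ℤ) ⧸ zeroSetSubgroup F))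
    (hH : Cardinal.mk H < κ) :
    ∃ φ : H →+ (I → ℤ), Function.Injective φ := by

  classical
  -- representatives
  set r : H → (I → ℤ) := fun a => Quotient.out (a : (I → ℤ) ⧸ zeroSetSubgroup F) with hr
  have hrk : ∀ a : H, (QuotientAddGroup.mk (r a) : (I → ℤ) ⧸ zeroSetSubgroup F) = ↑a := by
    intro a; exact QuotientAddGroup.out_eq' _
  -- for each pair, the agreement set is in F
  have hkey : ∀ a b : H, {i | r (a + b) i = r a i + r b i} ∈ F := by
    intro a b
    have h1 : (QuotientAddGroup.mk (r a + r b) : (I → ℤ) ⧸ zeroSetSubgroup F)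
        = QuotientAddGroup.mk (r (a + b)) := by
      rw [QuotientAddGroup.mk_add, hrk, hrk, hrk]; push_cast; ring
    have h2 : -(r a + r b) + r (a + b) ∈ zeroSetSubgroup F :=
      (QuotientAddGroup.eq).mp h1
    have h3 : {i | (-(r a + r b) + r (a + b)) i = 0} ∈ F := h2
    filter_upwards [h3] with i hi
    simp only [Pi.add_apply, Pi.neg_apply, Set.mem_setOf_eq] at *
    omega
  set g : H × H → Set I := fun p => {i | r (p.1 + p.2) i = r p.1 i + r p.2 i} with hg
  set s : Set (Set I) := Set.range g with hs
  have hsmall : Cardinal.mk s < κ := by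
    refine lt_of_le_of_lt (Cardinal.mk_range_le) ?_
    have : Cardinal.mk (H × H) = Cardinal.mk H * Cardinal.mk H := by
      simp [Cardinal.mk_prod]
    rw [this]
    exact Cardinal.mul_lt_of_lt hκ.le hH hH
  have hT : ⋂₀ s ∈ F := hcomp s hsmall (by rintro t ⟨p, rfl⟩; exact hkey p.1 p.2)
  set T : Set I := ⋂₀ s with hTdef
  have hTsub : ∀ (a b : H), ∀ i ∈ T, r (a + b) i = r a i + r b i := by
    intro a b i hi
    exact hi (g (a, b)) ⟨(a, b), rfl⟩
  refine ⟨AddMonoidHom.mk' (fun a => fun i => if i ∈ T then r a i else 0) ?_, ?_⟩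
  · intro a b
    funext i
    by_cases hi : i ∈ T
    · simp only [Pi.add_apply, if_pos hi]
      exact hTsub a b i hi
    · simp [hi]
  · rw [injective_iff_map_eq_zero]
    intro a ha
    have hzero : {i | r a i = 0} ∈ F := by
      refine Filter.mem_of_superset hT ?_
      intro i hi
      have := congrFun ha i
      simpa [hi] using this
    have : (↑a : (I → ℤ) ⧸ zeroSetSubgroup F) = 0 := by
      rw [← hrk a]
      exact (QuotientAddGroup.eq_zero_iff _).mpr hzero
    exact Subtype.ext this
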